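/- arXiv:1201.4807 — 4 statements merged into one kernel-verified Lean document; each statement's English description precedes it below -/
import Mathlib

section
/- Let a and b be positive integers and let g : ℤ² → ℤ² be the ℤ-linear map g(x₁, x₂) = (a·x₁, b·x₂). Then there do not exist vectors w₁, w₂ ∈ ℤ² and positive integers c, e such that g(w₁) = (-c, c), g(w₂) = (-e, -e), and w₁, w₂ generate ℤ² as an abelian group. -/
/-- Let `a, b` be positive integers and `g : ℤ² → ℤ²` the `ℤ`-linear map
`g(x₁, x₂) = (a·x₁, b·x₂)`. Then there do not exist vectors `w₁, w₂ ∈ ℤ²` and positive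
integers `c, e` with `g(w₁) = (-c, c)`, `g(w₂) = (-e, -e)`, such that `w₁, w₂` generate
`ℤ²` as an abelian group. -/
theorem stmt1 (a b : ℤ) (ha : 0 < a) (hb : 0 < b) :
    ¬ ∃ (w₁ w₂ : ℤ × ℤ) (c e : ℤ), 0 < c ∧ 0 < e ∧
      (a * w₁.1, b * w₁.2) = (-c, c) ∧
      (a * w₂.1, b * w₂.2) = (-e, -e) ∧
      Submodule.span ℤ ({w₁, w₂} : Set (ℤ × ℤ)) = ⊤ := by
  rintro ⟨w₁, w₂, c, e, hc, he, h1, h2, hspan⟩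
  have h1a : a * w₁.1 = -c := congrArg Prod.fst h1
  have h1b : b * w₁.2 = c := congrArg Prod.snd h1
  have h2a : a * w₂.1 = -e := congrArg Prod.fst h2
  have h2b : b * w₂.2 = -e := congrArg Prod.snd h2
  have hmem : ((1:ℤ), (0:ℤ)) ∈ Submodule.span ℤ ({w₁, w₂} : Set (ℤ × ℤ)) := by
    rw [hspan]; exact Submodule.mem_top
  rw [Submodule.mem_span_pair] at hmem
  obtain ⟨m, n, hmn⟩ := hmem
  have e1 : m * w₁.1 + n * w₂.1 = 1 := by
    have := congrArg Prod.fst hmn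
    simpa [Prod.smul_def, smul_eq_mul] using this
  have e2 : m * w₁.2 + n * w₂.2 = 0 := by
    have := congrArg Prod.snd hmn
    simpa [Prod.smul_def, smul_eq_mul] using this
  -- multiply e1 by a, e2 by b
  have E1 : -(m * c) - n * e = a := by
    have : a * (m * w₁.1 + n * w₂.1) = a * 1 := by rw [e1]
    linear_combination a * e1 - m * h1a - n * h2a
  have E2 : m * c - n * e = 0 := by
    have : b * (m * w₁.2 + n * w₂.2) = b * 0 := by rw [e2]
    linear_combination b * e2 - m * h1b - n * h2b
  -- so a = -2 n e, and e = -a * w₂.1, giving a * (1 - 2 * (n * w₂.1)) = 0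
  have key : a * 1 = a * (2 * (n * w₂.1)) := by linear_combination -E1 - E2 - 2 * n * h2a
  have := mul_left_cancel₀ (ne_of_gt ha) key
  omega
end

section
/- Let k be a field whose characteristic is neither 2 nor 3, and let f = X₃²X₄⁴ + X₁³X₂ + X₂⁴X₃⁶ in the polynomial ring k[X₁, X₂, X₃, X₄]. If p = (p₁, p₂, p₃, p₄) ∈ k⁴ satisfies f(p) = 0 and all four partial derivatives ∂f/∂Xᵢ vanish at p, then p₁p₂ = p₂p₃ = p₃p₄ = p₁p₄ = 0. -/
open MvPolynomial

/-- Let `k` be a field of characteristic neither 2 nor 3, and let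
`f = X₃²X₄⁴ + X₁³X₂ + X₂⁴X₃⁶` in `k[X₁, X₂, X₃, X₄]`. If `p ∈ k⁴` satisfies `f(p) = 0`
and all four partial derivatives of `f` vanish at `p`, then
`p₁p₂ = p₂p₃ = p₃p₄ = p₁p₄ = 0`. Here the variables `X₁, X₂, X₃, X₄` are indexed by
`0, 1, 2, 3 : Fin 4`. -/
theorem stmt2 {k : Type*} [Field k] (hchar2 : ringChar k ≠ 2) (hchar3 : ringChar k ≠ 3)
    (f : MvPolynomial (Fin 4) k)
    (hf : f = X 2 ^ 2 * X 3 ^ 4 + X 0 ^ 3 * X 1 + X 1 ^ 4 * X 2 ^ 6)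
    (p : Fin 4 → k) (hp : eval p f = 0) (hder : ∀ i : Fin 4, eval p (pderiv i f) = 0) :
    p 0 * p 1 = 0 ∧ p 1 * p 2 = 0 ∧ p 2 * p 3 = 0 ∧ p 0 * p 3 = 0 := by
  subst hf
  have h0 := hder 0
  have h1 := hder 1
  have h3 := hder 3
  simp [pderiv_mul, pderiv_pow, pderiv_X, Pi.single_apply] at h0 h1 h3
  have h2' : (2 : k) ≠ 0 := Ring.two_ne_zero hchar2
  have h3' : (3 : k) ≠ 0 := by
    intro h
    have hd : ringChar k ∣ 3 := ringChar.dvd (by exact_mod_cast h)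
    rcases (Nat.prime_three.eq_one_or_self_of_dvd _ hd) with h1 | h1
    · exact CharP.ringChar_ne_one h1
    · exact hchar3 h1
  have h4' : (4 : k) ≠ 0 := by
    intro h; apply h2'
    have : (4 : k) = 2 * 2 := by norm_num
    rcases mul_eq_zero.1 (this ▸ h) with h | h <;> exact h
  -- p 0 = 0
  have hp0 : p 0 = 0 := by
    rcases h0 with h | h | h
    · have : p 0 ^ 3 = 0 := by
        have := h1; rw [h] at this; simpa using this
      exact pow_eq_zero_iff (by norm_num) |>.1 this
    · exact absurd h h3'
    · exact h
  have hp12 : p 1 * p 2 = 0 := by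
    rw [hp0] at h1
    simp at h1
    rcases h1 with h | h | h
    · simp [pow_eq_zero_iff, h]  -- p 2 = 0?
    · exact absurd h h4'
    · simp [h]
  have hp23 : p 2 * p 3 = 0 := by
    rcases h3 with h | h | h
    · simp [h]
    · exact absurd h h4'
    · simp [h]
  exact ⟨by simp [hp0], hp12, hp23, by simp [hp0]⟩
end

section
/- Let k be a field, let R = k[x, y, z]/(xy − z²(z + 1)), let m be the ideal of R generated by the images of x, y, z, and let I be the ideal of R generated by the images of x − y(y + 1) and y − z. Then the image of I in the quotient ring R/m² is not a principal ideal. -/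
open MvPolynomial TrivSqZeroExt

section Aux

variable {k : Type*} [Field k]

private lemma aux_mul_inr {M : Type*} [AddCommGroup M] [Module k M] [Module kᵐᵒᵖ M]
    [IsCentralScalar k M] (a : TrivSqZeroExt k M) (w : M) :
    a * inr w = inr (a.fst • w) := by
  calc a * inr w = (inl a.fst + inr a.snd) * inr w := by rw [inl_fst_add_inr_snd_eq]
    _ = inl a.fst * inr w + inr a.snd * inr w := add_mul _ _ _
    _ = inr (a.fst • w) + 0 := by rw [inl_mul_inr, inr_mul_inr]
    _ = inr (a.fst • w) := add_zero _

end Aux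

/-- Let `k` be a field, `R = k[x, y, z]/(xy − z²(z + 1))`, `m` the ideal of `R` generated
by the images of `x, y, z`, and `I` the ideal of `R` generated by the images of
`x − y(y + 1)` and `y − z`. Then the image of `I` in `R/m²` is not a principal ideal.
Here `x, y, z` are the variables `X 0, X 1, X 2` of `MvPolynomial (Fin 3) k`. -/
theorem stmt4 {k : Type*} [Field k]
    (R : Type*) [CommRing R] (q : MvPolynomial (Fin 3) k →+* R)
    (hq : Function.Surjective q)
    (hker : RingHom.ker q = Ideal.span {(X 0 * X 1 - X 2 ^ 2 * (X 2 + 1) :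
      MvPolynomial (Fin 3) k)})
    (m I : Ideal R)
    (hm : m = Ideal.span {q (X 0), q (X 1), q (X 2)})
    (hI : I = Ideal.span {q (X 0 - X 1 * (X 1 + 1)), q (X 1 - X 2)}) :
    ¬ (Ideal.map (Ideal.Quotient.mk (m ^ 2)) I).IsPrincipal := by
  intro hprinc
  obtain ⟨G, hG⟩ := hprinc
  rw [Ideal.submodule_span_eq] at hG
  set P := MvPolynomial (Fin 3) k
  set π : P →+* R ⧸ m ^ 2 := (Ideal.Quotient.mk (m ^ 2)).comp q with hπ
  have hπsurj : Function.Surjective π := Ideal.Quotient.mk_surjective.comp hq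
  set n : Ideal P := Ideal.span {X 0, X 1, X 2} with hn
  have hmmap : m = Ideal.map q n := by
    rw [hm, hn, Ideal.map_span]
    congr 1
    simp [Set.image_insert_eq]
  have hrel : (X 0 * X 1 - X 2 ^ 2 * (X 2 + 1) : P) ∈ n ^ 2 := by
    have h0 : (X 0 : P) ∈ n := Ideal.subset_span (by simp)
    have h1 : (X 1 : P) ∈ n := Ideal.subset_span (by simp)
    have h2 : (X 2 : P) ∈ n := Ideal.subset_span (by simp)
    have hxy : (X 0 * X 1 : P) ∈ n ^ 2 := by
      rw [pow_two]; exact Ideal.mul_mem_mul h0 h1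
    have hz2 : (X 2 ^ 2 * (X 2 + 1) : P) ∈ n ^ 2 := by
      have : (X 2 ^ 2 : P) ∈ n ^ 2 := Ideal.pow_mem_pow h2 2
      exact Ideal.mul_mem_right _ _ this
    exact Ideal.sub_mem _ hxy hz2
  have hkerπ : ∀ p : P, π p = 0 → p ∈ n ^ 2 := by
    intro p hp
    have hq2 : q p ∈ m ^ 2 := by
      rw [← Ideal.Quotient.eq_zero_iff_mem]
      exact hp
    have hmpow : m ^ 2 = Ideal.map q (n ^ 2) := by rw [hmmap, Ideal.map_pow]
    rw [hmpow] at hq2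
    have hcm := Ideal.comap_map_of_surjective q hq (n ^ 2)
    have hmem : p ∈ Ideal.comap q (Ideal.map q (n ^ 2)) := hq2
    rw [hcm] at hmem
    have hker_le : Ideal.comap q ⊥ ≤ n ^ 2 := by
      have h : Ideal.comap q ⊥ = RingHom.ker q := rfl
      rw [h, hker, Ideal.span_le]
      intro x hx
      simp only [Set.mem_singleton_iff] at hx
      subst hx
      exact hrel
    exact (sup_le le_rfl hker_le) hmem
  set ψ : P →ₐ[k] TrivSqZeroExt k (Fin 3 → k) :=
    MvPolynomial.aeval (fun i => (inr (Pi.single i (1 : k)) : TrivSqZeroExt k (Fin 3 → k))) with hψ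
  have hψX : ∀ i, ψ (X i) = inr (Pi.single i (1 : k)) := fun i => aeval_X _ i
  have hψn2 : ∀ p ∈ n ^ 2, ψ p = 0 := by
    intro p hp
    have h1 : ψ p ∈ Ideal.map ψ (n ^ 2) := Ideal.mem_map_of_mem _ hp
    rw [Ideal.map_pow] at h1
    set K : Ideal (TrivSqZeroExt k (Fin 3 → k)) := RingHom.ker (fstHom k k (Fin 3 → k)).toRingHom with hK
    have hle : Ideal.map ψ n ≤ K := by
      rw [hn, Ideal.map_span, Ideal.span_le]
      rintro x ⟨p', hp', rfl⟩
      simp only [Set.mem_insert_iff, Set.mem_singleton_iff] at hp'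
      rcases hp' with rfl | rfl | rfl <;>
        · show _ ∈ RingHom.ker _
          rw [RingHom.mem_ker]
          simp [hψX]
    have hK2 : K ^ 2 = ⊥ := by
      rw [pow_two]
      apply le_antisymm _ bot_le
      rw [Ideal.mul_le]
      intro a ha b hb
      have ha' : a.fst = 0 := ha
      have hb' : b.fst = 0 := hb
      have ha2 : a = inr a.snd := by
        conv_lhs => rw [← inl_fst_add_inr_snd_eq a]
        rw [ha']; simp
      have hb2 : b = inr b.snd := by
        conv_lhs => rw [← inl_fst_add_inr_snd_eq b]
        rw [hb']; simp
      rw [ha2, hb2, inr_mul_inr]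
      exact Ideal.zero_mem ⊥
    have hfin : ψ p ∈ (⊥ : Ideal (TrivSqZeroExt k (Fin 3 → k))) := by
      rw [← hK2]
      exact (Ideal.pow_right_mono hle 2) h1
    simpa using hfin
  have hkill : ∀ p : P, π p = 0 → ψ p = 0 := fun p hp => hψn2 p (hkerπ p hp)
  set f1 : P := X 0 - X 1 * (X 1 + 1) with hf1
  set f2 : P := X 1 - X 2 with hf2
  set u1 : Fin 3 → k := Pi.single 0 (1 : k) - Pi.single 1 (1 : k) with hu1
  set u2 : Fin 3 → k := Pi.single 1 (1 : k) - Pi.single 2 (1 : k) with hu2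
  have hψf1 : ψ f1 = inr u1 := by
    rw [hf1, map_sub, map_mul, map_add, map_one, hψX, hψX]
    rw [mul_add, inr_mul_inr, mul_one, zero_add, hu1, inr_sub]
  have hψf2 : ψ f2 = inr u2 := by
    rw [hf2, map_sub, hψX, hψX, hu2, inr_sub]
  -- the mapped ideal
  have hImap : Ideal.map (Ideal.Quotient.mk (m ^ 2)) I = Ideal.span {π f1, π f2} := by
    rw [hI, Ideal.map_span]
    congr 1
    simp [Set.image_insert_eq, hπ]
  -- memberships
  have hmem1 : π f1 ∈ Ideal.span {G} := by rw [← hG, hImap]; exact Ideal.subset_span (by simp)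
  have hmem2 : π f2 ∈ Ideal.span {G} := by rw [← hG, hImap]; exact Ideal.subset_span (by simp)
  have hmemG : G ∈ Ideal.span {π f1, π f2} := by
    rw [← hImap, hG]; exact Ideal.subset_span (by simp)
  obtain ⟨a, ha⟩ := Ideal.mem_span_singleton'.mp hmem1
  obtain ⟨b, hb⟩ := Ideal.mem_span_singleton'.mp hmem2
  obtain ⟨u, v, huv⟩ := Ideal.mem_span_pair.mp hmemG
  obtain ⟨g, hg⟩ := hπsurj G
  obtain ⟨α, hα⟩ := hπsurj a
  obtain ⟨β, hβ⟩ := hπsurj b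
  obtain ⟨μ, hμ⟩ := hπsurj u
  obtain ⟨ν, hν⟩ := hπsurj v
  -- transfer equations through ψ
  have heq1 : ψ f1 = ψ α * ψ g := by
    have : π (f1 - α * g) = 0 := by
      rw [map_sub, map_mul, hα, hg, ha, sub_self]
    have := hkill _ this
    rw [map_sub, map_mul, sub_eq_zero] at this
    exact this
  have heq2 : ψ f2 = ψ β * ψ g := by
    have : π (f2 - β * g) = 0 := by
      rw [map_sub, map_mul, hβ, hg, hb, sub_self]
    have := hkill _ this
    rw [map_sub, map_mul, sub_eq_zero] at this
    exact this
  have heq3 : ψ g = ψ μ * ψ f1 + ψ ν * ψ f2 := by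
    have : π (g - (μ * f1 + ν * f2)) = 0 := by
      rw [map_sub, map_add, map_mul, map_mul, hμ, hν, hg, huv, sub_self]
    have := hkill _ this
    rw [map_sub, map_add, map_mul, map_mul, sub_eq_zero] at this
    exact this
  -- fst of ψ g is zero
  have hfstg : (ψ g).fst = 0 := by
    rw [heq3, hψf1, hψf2]
    simp [fst_add, fst_mul, fst_inr]
  have hginr : ψ g = inr (ψ g).snd := by
    conv_lhs => rw [← inl_fst_add_inr_snd_eq (ψ g)]
    rw [hfstg]; simp
  set w : Fin 3 → k := (ψ g).snd with hw
  set c : k := (ψ α).fst with hc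
  set d : k := (ψ β).fst with hd
  have hcw : u1 = c • w := by
    have : inr u1 = (inr (c • w) : TrivSqZeroExt k (Fin 3 → k)) := by
      rw [← hψf1, heq1, hginr, aux_mul_inr]
    exact inr_injective this
  have hdw : u2 = d • w := by
    have : inr u2 = (inr (d • w) : TrivSqZeroExt k (Fin 3 → k)) := by
      rw [← hψf2, heq2, hginr, aux_mul_inr]
    exact inr_injective this
  have hkey : d • u1 = c • u2 := by
    rw [hcw, hdw, smul_comm]
  have hd0 : d = 0 := by
    have := congrFun hkey 0
    simpa [hu1, hu2, Pi.smul_apply, Pi.sub_apply, Pi.single_apply] using this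
  have : u2 = 0 := by rw [hdw, hd0, zero_smul]
  have h2 := congrFun this 1
  simp [hu2, Pi.sub_apply, Pi.single_apply] at h2
end

section
/- Let A be a commutative local ring and let M be a free A-module of rank 1. Suppose M is the internal direct sum of a family (N_i)_{i ∈ I} of A-submodules. Then there exist an index i ∈ I and an element x ∈ N_i such that x generates M, i.e., the A-span of x is all of M. -/
/-!
Once `M` is identified with `A`, the submodules `N i` become ideals whose supremum is `A`.
In a local ring every proper ideal lies in the maximal ideal, so one of them is all of `A`;
the corresponding `N i` is then `M` and contains the basis vector.
-/

theorem IsLocalRing.exists_eq_top_of_iSup_eq_top {A ι : Type*} [CommRing A] [IsLocalRing A]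
    {I : ι → Ideal A} (hI : ⨆ i, I i = ⊤) : ∃ i, I i = ⊤ := by
  by_contra! hne
  apply (IsLocalRing.maximalIdeal.isMaximal A).ne_top
  rw [eq_top_iff, ← hI]
  exact iSup_le fun i => IsLocalRing.le_maximalIdeal (hne i)

theorem Submodule.exists_eq_top_of_iSup_eq_top_of_linearEquiv {A M ι : Type*} [CommRing A]
    [IsLocalRing A] [AddCommGroup M] [Module A M] (e : M ≃ₗ[A] A) {N : ι → Submodule A M}
    (hN : ⨆ i, N i = ⊤) : ∃ i, N i = ⊤ := by
  let φ := Submodule.orderIsoMapComap e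
  obtain ⟨i, hi⟩ := IsLocalRing.exists_eq_top_of_iSup_eq_top (I := fun i => φ (N i))
    (by rw [← φ.map_iSup, hN, φ.map_top])
  exact ⟨i, (map_eq_top_iff φ).mp hi⟩

/-- Let `A` be a commutative local ring and `M` a free `A`-module of rank 1. Suppose `M`
is the internal direct sum of a family `(N i)` of `A`-submodules. Then some `N i` contains
an element `x` which generates `M`, i.e. the `A`-span of `x` is all of `M`. -/
theorem stmt5 {A M ι : Type*} [CommRing A] [IsLocalRing A] [AddCommGroup M] [Module A M]
    [DecidableEq ι] (b : Module.Basis (Fin 1) A M) (N : ι → Submodule A M)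
    (h : DirectSum.IsInternal N) :
    ∃ i : ι, ∃ x ∈ N i, Submodule.span A ({x} : Set M) = ⊤ := by
  obtain ⟨i, hi⟩ := Submodule.exists_eq_top_of_iSup_eq_top_of_linearEquiv
    (b.equivFun.trans (LinearEquiv.funUnique (Fin 1) A A)) h.submodule_iSup_eq_top
  refine ⟨i, b 0, hi ▸ Submodule.mem_top, ?_⟩
  rw [← b.span_eq, Set.range_unique]
  rfl
end
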